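/- Let X be a point forecast, T a single-valued functional with identification function V satisfying Assumptions (V) and (X), and S a canonical loss for T, such that E[S(X+η,Y)] and E[V(X+η,Y)] are well defined and locally bounded as functions of η ∈ ℝ. Then X is unconditionally T-calibrated if, and only if, E[S(X+c,Y)] ≥ E[S(X,Y)] for every c ∈ ℝ. -/

import Mathlib

open MeasureTheory ProbabilityTheory

noncomputable section

/-- The cumulative distribution function of a measure `G` on `ℝ`, evaluated at `y`. -/
def cdfAt (G : Measure ℝ) (y : ℝ) : ℝ := (G (Set.Iic y)).toReal

/-- The left limit `G(y−)` of the CDF of `G` at `y`. -/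
def cdfLt (G : Measure ℝ) (y : ℝ) : ℝ := (G (Set.Iio y)).toReal

/-- The lower `α`-quantile `q_α^-(G) = inf {x : G(x) ≥ α}`. -/
def lowerQuantile (G : Measure ℝ) (α : ℝ) : ℝ := sInf {x : ℝ | α ≤ cdfAt G x}

/-- The upper `α`-quantile `q_α^+(G) = sup {x : G(x−) ≤ α}`. -/
def upperQuantile (G : Measure ℝ) (α : ℝ) : ℝ := sSup {x : ℝ | cdfLt G x ≤ α}

variable {Ω : Type*} [MeasurableSpace Ω]

/-- The (randomized) probability integral transform `Z_F = F(Y−) + U (F(Y) − F(Y−))`. -/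
def PIT (F : Ω → Measure ℝ) (Y U : Ω → ℝ) (ω : Ω) : ℝ :=
  cdfLt (F ω) (Y ω) + U ω * (cdfAt (F ω) (Y ω) - cdfLt (F ω) (Y ω))

/-- The uniform distribution on `[0,1]`. -/
def unif01 : Measure ℝ := volume.restrict (Set.Icc (0:ℝ) 1)

/-- A prediction space: a probability space carrying a random probability measure `F` on `ℝ`
(the predictive distribution), an outcome `Y`, and a uniform random variable `U` that is
independent of the σ-algebra generated by `F` and `Y`. -/
structure IsPredictionSpace (μ : Measure Ω) (F : Ω → Measure ℝ) (Y U : Ω → ℝ) : Prop where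
  isProb : IsProbabilityMeasure μ
  probF : ∀ ω, IsProbabilityMeasure (F ω)
  measF : Measurable F
  measY : Measurable Y
  measU : Measurable U
  unifU : μ.map U = unif01
  indepU : Indep (MeasurableSpace.comap U inferInstance)
    (MeasurableSpace.comap F inferInstance ⊔ MeasurableSpace.comap Y inferInstance) μ

/-- `F` is auto-calibrated: `F(y) = Q(Y ≤ y | σ(F))` a.s. for every `y`. -/
def AutoCalibrated (μ : Measure Ω) (F : Ω → Measure ℝ) (Y : Ω → ℝ) : Prop :=
  ∀ y : ℝ, (fun ω => cdfAt (F ω) y)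
    =ᵐ[μ] μ[Set.indicator {ω | Y ω ≤ y} (fun _ => (1:ℝ)) | MeasurableSpace.comap F inferInstance]

/-- `F` is probabilistically calibrated: the PIT is uniform on `[0,1]`. -/
def ProbCalibrated (μ : Measure Ω) (F : Ω → Measure ℝ) (Y U : Ω → ℝ) : Prop :=
  μ.map (PIT F Y U) = unif01

/-- `F` is marginally calibrated: `E[F(y)] = Q(Y ≤ y)` for every `y`. -/
def MargCalibrated (μ : Measure Ω) (F : Ω → Measure ℝ) (Y : Ω → ℝ) : Prop :=
  ∀ y : ℝ, ∫ ω, cdfAt (F ω) y ∂μ = (μ {ω | Y ω ≤ y}).toReal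

/-- `F` is CEP calibrated: `Q(Z_F ≤ α | q_α^-(F)) = α` a.s. for every `α ∈ (0,1)`. -/
def CEPCalibrated (μ : Measure Ω) (F : Ω → Measure ℝ) (Y U : Ω → ℝ) : Prop :=
  ∀ α ∈ Set.Ioo (0:ℝ) 1,
    μ[Set.indicator {ω | PIT F Y U ω ≤ α} (fun _ => (1:ℝ)) |
      MeasurableSpace.comap (fun ω => lowerQuantile (F ω) α) inferInstance]
      =ᵐ[μ] fun _ => α

/-- `F` is threshold calibrated: `Q(Y ≤ t | F(t)) = F(t)` a.s. for every `t`. -/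
def ThreshCalibrated (μ : Measure Ω) (F : Ω → Measure ℝ) (Y : Ω → ℝ) : Prop :=
  ∀ t : ℝ,
    μ[Set.indicator {ω | Y ω ≤ t} (fun _ => (1:ℝ)) |
      MeasurableSpace.comap (fun ω => cdfAt (F ω) t) inferInstance]
      =ᵐ[μ] fun ω => cdfAt (F ω) t

/-- An identification function: measurable, increasing and left-continuous in its
first argument. -/
structure IsIdentificationFunction (V : ℝ → ℝ → ℝ) : Prop where
  meas : Measurable (Function.uncurry V)
  mono : ∀ y : ℝ, Monotone fun x => V x y
  leftCont : ∀ y x : ℝ, ContinuousWithinAt (fun x => V x y) (Set.Iic x) x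

/-- Lower bound `T^-(G) = sup {x : ∫ V(x,y) dG(y) < 0}` of the functional induced by `V`. -/
def Tminus (V : ℝ → ℝ → ℝ) (G : Measure ℝ) : ℝ := sSup {x : ℝ | ∫ y, V x y ∂G < 0}

/-- Upper bound `T^+(G) = inf {x : ∫ V(x,y) dG(y) > 0}` of the functional induced by `V`. -/
def Tplus (V : ℝ → ℝ → ℝ) (G : Measure ℝ) : ℝ := sInf {x : ℝ | 0 < ∫ y, V x y ∂G}

/-- `V` is of prediction error form `V(x,y) = v(x−y)`. -/
def PredErrorForm (V : ℝ → ℝ → ℝ) : Prop :=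
  ∃ v : ℝ → ℝ, Monotone v ∧ (∀ x : ℝ, ContinuousWithinAt v (Set.Iic x) x) ∧
    (∃ r : ℝ, 0 < r ∧ v (-r) < 0 ∧ 0 < v r) ∧ ∀ x y : ℝ, V x y = v (x - y)

/-- `V` is of the form `V(x,y) = x − T(δ_y)` for a singleton-valued functional `T`. -/
def DiracSingletonForm (V : ℝ → ℝ → ℝ) : Prop :=
  (∀ y : ℝ, Tminus V (Measure.dirac y) = Tplus V (Measure.dirac y)) ∧
  ∀ x y : ℝ, V x y = x - Tminus V (Measure.dirac y)

/-- Assumption (V): `V` induces the functional on a convex class `𝓕₀ ⊇ 𝓕` of probability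
measures containing all Dirac measures, and `V` is of prediction error form or of the
form `V(x,y) = x − T(δ_y)` for a singleton-valued `T`. -/
structure AssumptionV (V : ℝ → ℝ → ℝ) (𝓕 : Set (Measure ℝ)) : Prop where
  inducing : ∃ 𝓕₀ : Set (Measure ℝ), 𝓕 ⊆ 𝓕₀ ∧ (∀ G ∈ 𝓕₀, IsProbabilityMeasure G) ∧
    (∀ y : ℝ, Measure.dirac y ∈ 𝓕₀) ∧
    (∀ G₁ ∈ 𝓕₀, ∀ G₂ ∈ 𝓕₀, ∀ p : ℝ, 0 ≤ p → p ≤ 1 →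
      ENNReal.ofReal p • G₁ + ENNReal.ofReal (1 - p) • G₂ ∈ 𝓕₀) ∧
    ∀ G ∈ 𝓕₀, ∀ x : ℝ, Integrable (fun y => V x y) G
  form : PredErrorForm V ∨ DiracSingletonForm V

/-- The pair `(T^-(F), T^+(F))` of the interval-valued functional applied to the
random predictive distribution. -/
def TpairOf (V : ℝ → ℝ → ℝ) (F : Ω → Measure ℝ) (ω : Ω) : ℝ × ℝ :=
  (Tminus V (F ω), Tplus V (F ω))

/-- Conditional `T`-calibration of the predictive distribution `F`:
`T(L(Y | T(F))) = T(F)` almost surely. -/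
def CondTCalibrated (μ : Measure Ω) [IsFiniteMeasure μ] (V : ℝ → ℝ → ℝ)
    (F : Ω → Measure ℝ) (Y : Ω → ℝ) : Prop :=
  ∀ᵐ ω ∂μ,
    Tminus V (condDistrib Y (TpairOf V F) μ (TpairOf V F ω)) = Tminus V (F ω) ∧
    Tplus V (condDistrib Y (TpairOf V F) μ (TpairOf V F ω)) = Tplus V (F ω)

/-- Unconditional `T`-calibration of the predictive distribution `F`. -/
def UncondTCalibrated (μ : Measure Ω) (V : ℝ → ℝ → ℝ)
    (F : Ω → Measure ℝ) (Y : Ω → ℝ) : Prop :=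
  ∀ ε : ℝ, 0 < ε →
    (∫ ω, V (Tplus V (F ω) - ε) (Y ω) ∂μ) ≤ 0 ∧
    0 ≤ ∫ ω, V (Tminus V (F ω) + ε) (Y ω) ∂μ

/-- Unconditional `T`-calibration of a single-valued point forecast `X`. -/
def UncondCalibratedPt (μ : Measure Ω) (V : ℝ → ℝ → ℝ) (X Y : Ω → ℝ) : Prop :=
  ∀ ε : ℝ, 0 < ε →
    (∫ ω, V (X ω - ε) (Y ω) ∂μ) ≤ 0 ∧ 0 ≤ ∫ ω, V (X ω + ε) (Y ω) ∂μ

/-- The sets defining `T^-(G)` and `T^+(G)` are nonempty and bounded, so that the induced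
functional is well defined and finite at `G`. -/
def TWellDefined (V : ℝ → ℝ → ℝ) (G : Measure ℝ) : Prop :=
  {x : ℝ | ∫ y, V x y ∂G < 0}.Nonempty ∧ BddAbove {x : ℝ | ∫ y, V x y ∂G < 0} ∧
  {x : ℝ | 0 < ∫ y, V x y ∂G}.Nonempty ∧ BddBelow {x : ℝ | 0 < ∫ y, V x y ∂G}

/-- The elementary loss `S_η(x,y) = (1{η ≤ x} − 1{η ≤ y}) V(η,y)`. -/
def elemLoss (V : ℝ → ℝ → ℝ) (η x y : ℝ) : ℝ :=
  ((if η ≤ x then (1:ℝ) else 0) - if η ≤ y then (1:ℝ) else 0) * V η y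

/-- `S` has mixture (Choquet) form with respect to the identification function `V`. -/
def MixtureForm (V S : ℝ → ℝ → ℝ) : Prop :=
  ∃ H : Measure ℝ, IsLocallyFiniteMeasure H ∧
    ∀ x y : ℝ, S x y = ∫ η, elemLoss V η x y ∂H

/-- `S` is a canonical loss for the functional induced by `V`. -/
def IsCanonicalLoss (V S : ℝ → ℝ → ℝ) : Prop :=
  (∀ x y : ℝ, 0 ≤ S x y) ∧
  ∃ a : ℝ, 0 < a ∧ ∃ b : ℝ → ℝ, Measurable b ∧
    ∀ x y : ℝ, S x y = a * (∫ η, elemLoss V η x y) + b y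

/-- `S` is a consistent scoring function for the functional induced by `V` on the class `𝓕`. -/
def ConsistentFor (S V : ℝ → ℝ → ℝ) (𝓕 : Set (Measure ℝ)) : Prop :=
  ∀ G ∈ 𝓕, ∀ t ∈ Set.Icc (Tminus V G) (Tplus V G), ∀ x : ℝ,
    ∫ y, S t y ∂G ≤ ∫ y, S x y ∂G

/-- `S` is a strictly consistent scoring function for the functional induced by `V` on `𝓕`. -/
def StrictlyConsistentFor (S V : ℝ → ℝ → ℝ) (𝓕 : Set (Measure ℝ)) : Prop :=
  ConsistentFor S V 𝓕 ∧
  ∀ G ∈ 𝓕, ∀ t ∈ Set.Icc (Tminus V G) (Tplus V G), ∀ x : ℝ,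
    x ∉ Set.Icc (Tminus V G) (Tplus V G) → ∫ y, S t y ∂G < ∫ y, S x y ∂G

/-- The empirical distribution of the outcomes `y i`, `i ∈ s`. -/
def empOn {n : ℕ} (y : Fin n → ℝ) (s : Finset (Fin n)) : Measure ℝ :=
  (s.card : ENNReal)⁻¹ • ∑ i ∈ s, Measure.dirac (y i)

/-- A locally bounded real function of a real variable. -/
def LocallyBdd (f : ℝ → ℝ) : Prop :=
  ∀ η₀ : ℝ, ∃ ε : ℝ, 0 < ε ∧ ∃ C : ℝ, ∀ η : ℝ, |η - η₀| < ε → |f η| ≤ C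

/-- All CDFs in the class `𝓕` are continuous and strictly increasing on a shared
support interval. -/
def CSI (𝓕 : Set (Measure ℝ)) : Prop :=
  ∃ S : Set ℝ, S.Nonempty ∧ S.OrdConnected ∧ ∀ G ∈ 𝓕,
    Continuous (cdfAt G) ∧ StrictMonoOn (cdfAt G) S ∧ G Sᶜ = 0

/-- The conditioning variable for quantile calibration at level `α`: the interval of
`α`-quantiles, represented by its endpoints. -/
def qPairOf (F : Ω → Measure ℝ) (α : ℝ) (ω : Ω) : ℝ × ℝ :=
  (lowerQuantile (F ω) α, upperQuantile (F ω) α)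

/-- `F` is quantile calibrated: for every `α ∈ (0,1)`,
`q_α(L(Y | q_α(F))) = q_α(F)` almost surely. -/
def QuantileCalibrated (μ : Measure Ω) [IsFiniteMeasure μ]
    (F : Ω → Measure ℝ) (Y : Ω → ℝ) : Prop :=
  ∀ α ∈ Set.Ioo (0:ℝ) 1, ∀ᵐ ω ∂μ,
    lowerQuantile (condDistrib Y (qPairOf F α) μ (qPairOf F α ω)) α
      = lowerQuantile (F ω) α ∧
    upperQuantile (condDistrib Y (qPairOf F α) μ (qPairOf F α ω)) α
      = upperQuantile (F ω) α


section AuxStatement9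

lemma aux_elemLoss_integral (V : ℝ → ℝ → ℝ) (x y : ℝ) :
    (∫ η, elemLoss V η x y) = ∫ η in y..x, V η y := by
  rcases le_total y x with h | h
  · have he : (fun η => elemLoss V η x y) = (Set.Ioc y x).indicator (fun η => V η y) := by
      funext η
      unfold elemLoss
      by_cases h1 : η ≤ y
      · simp [Set.indicator_apply, Set.mem_Ioc, h1, h1.trans h, not_lt.2 h1]
      · by_cases h2 : η ≤ x
        · simp [Set.indicator_apply, Set.mem_Ioc, h1, h2, lt_of_not_ge h1]
        · simp [Set.indicator_apply, Set.mem_Ioc, h1, h2]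
    rw [he, MeasureTheory.integral_indicator measurableSet_Ioc,
      intervalIntegral.integral_of_le h]
  · have he : (fun η => elemLoss V η x y)
        = fun η => -((Set.Ioc x y).indicator (fun η => V η y) η) := by
      funext η
      unfold elemLoss
      by_cases h1 : η ≤ x
      · simp [Set.indicator_apply, Set.mem_Ioc, h1, h1.trans h, not_lt.2 h1]
      · by_cases h2 : η ≤ y
        · simp [Set.indicator_apply, Set.mem_Ioc, h1, h2, lt_of_not_ge h1]
        · simp [Set.indicator_apply, Set.mem_Ioc, h1, h2]
    rw [he, MeasureTheory.integral_neg, MeasureTheory.integral_indicator measurableSet_Ioc,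
      ← intervalIntegral.integral_of_le h, intervalIntegral.integral_symm, neg_neg]

lemma aux_S_diff {V S : ℝ → ℝ → ℝ} (hV : IsIdentificationFunction V)
    {a : ℝ} {b : ℝ → ℝ}
    (hform : ∀ x y : ℝ, S x y = a * (∫ η, elemLoss V η x y) + b y)
    (x y c : ℝ) :
    S (x + c) y - S x y = a * ∫ u in (0:ℝ)..c, V (x + u) y := by
  have hii : ∀ p q : ℝ, IntervalIntegrable (fun η => V η y) volume p q :=
    fun p q => (hV.mono y).intervalIntegrable
  have hsub : (∫ η in y..(x + c), V η y) - ∫ η in y..x, V η y = ∫ η in x..(x + c), V η y :=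
    intervalIntegral.integral_interval_sub_left (hii _ _) (hii _ _)
  have hcomp : (∫ u in (0:ℝ)..c, V (x + u) y) = ∫ η in x..(x + c), V η y := by
    simpa using intervalIntegral.integral_comp_add_left (a := (0:ℝ)) (b := c)
      (fun η => V η y) x
  rw [hform, hform, aux_elemLoss_integral, aux_elemLoss_integral, hcomp, ← hsub]
  ring

lemma aux_swap {Ω : Type*} [MeasurableSpace Ω] (μ : Measure Ω) [IsProbabilityMeasure μ]
    (X Y : Ω → ℝ) (hX : Measurable X) (hY : Measurable Y)
    {V : ℝ → ℝ → ℝ} (hV : IsIdentificationFunction V)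
    (hVint : ∀ η : ℝ, Integrable (fun ω => V (X ω + η) (Y ω)) μ)
    (p q : ℝ) :
    ∫ ω, (∫ u in Set.Ioc p q, V (X ω + u) (Y ω)) ∂μ
      = ∫ u in Set.Ioc p q, (∫ ω, V (X ω + u) (Y ω) ∂μ) := by
  set ν := volume.restrict (Set.Ioc p q) with hν
  haveI : IsFiniteMeasure ν := by
    constructor
    rw [hν, Measure.restrict_apply_univ, Real.volume_Ioc]
    exact ENNReal.ofReal_lt_top
  have hFmeas : Measurable (fun z : Ω × ℝ => V (X z.1 + z.2) (Y z.1)) := by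
    have hm : Measurable (fun z : Ω × ℝ => (X z.1 + z.2, Y z.1)) :=
      ((hX.comp measurable_fst).add measurable_snd).prodMk (hY.comp measurable_fst)
    exact hV.meas.comp hm
  have hhmeas : Measurable (fun ω => |V (X ω + p) (Y ω)| + |V (X ω + q) (Y ω)|) := by
    have h1 : Measurable fun ω => V (X ω + p) (Y ω) :=
      hV.meas.comp ((hX.add_const p).prodMk hY)
    have h2 : Measurable fun ω => V (X ω + q) (Y ω) :=
      hV.meas.comp ((hX.add_const q).prodMk hY)
    exact h1.abs.add h2.abs
  have hhint : Integrable (fun ω => |V (X ω + p) (Y ω)| + |V (X ω + q) (Y ω)|) μ :=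
    (hVint p).abs.add (hVint q).abs
  have hbound : Integrable
      (fun z : Ω × ℝ => |V (X z.1 + p) (Y z.1)| + |V (X z.1 + q) (Y z.1)|) (μ.prod ν) := by
    have hm : Measurable fun z : Ω × ℝ => |V (X z.1 + p) (Y z.1)| + |V (X z.1 + q) (Y z.1)| :=
      hhmeas.comp measurable_fst
    rw [MeasureTheory.integrable_prod_iff hm.aestronglyMeasurable]
    refine ⟨Filter.Eventually.of_forall fun ω => ?_, ?_⟩
    · simpa using integrable_const (μ := ν)
        (c := |V (X ω + p) (Y ω)| + |V (X ω + q) (Y ω)|)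
    simp only [integral_const]
    simpa [smul_eq_mul] using hhint.norm.const_mul (ν.real Set.univ)
  have hF : Integrable (fun z : Ω × ℝ => V (X z.1 + z.2) (Y z.1)) (μ.prod ν) := by
    refine hbound.mono hFmeas.aestronglyMeasurable ?_
    have hprod : μ.prod ν = (μ.prod volume).restrict (Set.univ ×ˢ Set.Ioc p q) := by
      rw [hν, ← Measure.prod_restrict, Measure.restrict_univ]
    rw [hprod]
    refine MeasureTheory.ae_restrict_of_forall_mem (MeasurableSet.univ.prod measurableSet_Ioc) ?_
    rintro ⟨ω, u⟩ ⟨-, hu⟩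
    have h1 : V (X ω + p) (Y ω) ≤ V (X ω + u) (Y ω) := hV.mono (Y ω) (by linarith [hu.1])
    have h2 : V (X ω + u) (Y ω) ≤ V (X ω + q) (Y ω) := hV.mono (Y ω) (by linarith [hu.2])
    have l1 := neg_abs_le (V (X ω + p) (Y ω))
    have l2 := le_abs_self (V (X ω + q) (Y ω))
    have l3 := abs_nonneg (V (X ω + p) (Y ω))
    have l4 := abs_nonneg (V (X ω + q) (Y ω))
    simp only [Real.norm_eq_abs]
    rw [abs_of_nonneg (add_nonneg l3 l4), abs_le]
    constructor <;> linarith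
  exact MeasureTheory.integral_integral_swap (f := fun ω u => V (X ω + u) (Y ω)) hF

lemma aux_D_diff {Ω : Type*} [MeasurableSpace Ω] (μ : Measure Ω) [IsProbabilityMeasure μ]
    (X Y : Ω → ℝ) (hX : Measurable X) (hY : Measurable Y)
    {V S : ℝ → ℝ → ℝ} (hV : IsIdentificationFunction V)
    {a : ℝ} {b : ℝ → ℝ}
    (hform : ∀ x y : ℝ, S x y = a * (∫ η, elemLoss V η x y) + b y)
    (hSint : ∀ η : ℝ, Integrable (fun ω => S (X ω + η) (Y ω)) μ)
    (hVint : ∀ η : ℝ, Integrable (fun ω => V (X ω + η) (Y ω)) μ)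
    (c : ℝ) :
    (∫ ω, S (X ω + c) (Y ω) ∂μ) - (∫ ω, S (X ω) (Y ω) ∂μ)
      = a * ∫ u in (0:ℝ)..c, (∫ ω, V (X ω + u) (Y ω) ∂μ) := by
  have hS0 : Integrable (fun ω => S (X ω) (Y ω)) μ := by
    simpa using hSint 0
  have h1 : (∫ ω, S (X ω + c) (Y ω) ∂μ) - (∫ ω, S (X ω) (Y ω) ∂μ)
      = ∫ ω, (S (X ω + c) (Y ω) - S (X ω) (Y ω)) ∂μ :=
    (MeasureTheory.integral_sub (hSint c) hS0).symm
  rw [h1]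
  have h2 : ∀ ω, S (X ω + c) (Y ω) - S (X ω) (Y ω)
      = a * ∫ u in (0:ℝ)..c, V (X ω + u) (Y ω) :=
    fun ω => aux_S_diff hV hform (X ω) (Y ω) c
  simp only [h2]
  rw [MeasureTheory.integral_const_mul]
  congr 1
  rcases le_total 0 c with hc | hc
  · simp only [intervalIntegral.integral_of_le hc]
    exact aux_swap μ X Y hX hY hV hVint 0 c
  · have hrw : ∀ ω : Ω, (∫ u in (0:ℝ)..c, V (X ω + u) (Y ω))
        = -(∫ u in Set.Ioc c 0, V (X ω + u) (Y ω)) := by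
      intro ω
      rw [intervalIntegral.integral_symm, intervalIntegral.integral_of_le hc]
    simp only [hrw, MeasureTheory.integral_neg]
    rw [aux_swap μ X Y hX hY hV hVint c 0,
      intervalIntegral.integral_symm, intervalIntegral.integral_of_le hc]

end AuxStatement9

/-- **Theorem (Statement 9).** Under a canonical loss `S` for the functional `T`, the
point forecast `X` is unconditionally `T`-calibrated if, and only if, the expected
canonical loss deteriorates under translation. -/
theorem uncond_calibration_iff_translation_optimal
    {Ω : Type*} [MeasurableSpace Ω] (μ : Measure Ω) [IsProbabilityMeasure μ]
    (X Y : Ω → ℝ) (hX : Measurable X) (hY : Measurable Y)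
    (V : ℝ → ℝ → ℝ) (hV : IsIdentificationFunction V)
    (𝓕 : Set (Measure ℝ)) (hAV : AssumptionV V 𝓕)
    (T : Measure ℝ → ℝ) (hT : T = Tminus V ∨ T = Tplus V)
    -- Assumption (X): the recalibrated forecast is well defined and finite a.s.
    (hwd : ∀ᵐ ω ∂μ, TWellDefined V (condDistrib Y X μ (X ω)))
    (S : ℝ → ℝ → ℝ) (hS : IsCanonicalLoss V S)
    -- E[S(X+η,Y)] and E[V(X+η,Y)] are well defined and locally bounded in η:
    (hSint : ∀ η : ℝ, Integrable (fun ω => S (X ω + η) (Y ω)) μ)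
    (hVint : ∀ η : ℝ, Integrable (fun ω => V (X ω + η) (Y ω)) μ)
    (hSbdd : LocallyBdd (fun η => ∫ ω, S (X ω + η) (Y ω) ∂μ))
    (hVbdd : LocallyBdd (fun η => ∫ ω, V (X ω + η) (Y ω) ∂μ)) :
    UncondCalibratedPt μ V X Y ↔
      ∀ c : ℝ, ∫ ω, S (X ω) (Y ω) ∂μ ≤ ∫ ω, S (X ω + c) (Y ω) ∂μ := by
  obtain ⟨hSnn, a, ha, b, hb, hform⟩ := hS
  set g : ℝ → ℝ := fun u => ∫ ω, V (X ω + u) (Y ω) ∂μ with hg_def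
  have hg : Monotone g := by
    intro u v huv
    exact MeasureTheory.integral_mono (hVint u) (hVint v)
      (fun ω => hV.mono (Y ω) (by linarith))
  have hgii : ∀ p q : ℝ, IntervalIntegrable g volume p q := fun p q => hg.intervalIntegrable
  have key : ∀ c : ℝ, (∫ ω, S (X ω + c) (Y ω) ∂μ) - (∫ ω, S (X ω) (Y ω) ∂μ)
      = a * ∫ u in (0:ℝ)..c, g u :=
    fun c => aux_D_diff μ X Y hX hY hV hform hSint hVint c
  constructor
  · intro hcal c
    have h1 : 0 ≤ ∫ u in (0:ℝ)..c, g u := by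
      rcases le_total 0 c with hc | hc
      · refine intervalIntegral.integral_nonneg_of_ae_restrict hc ?_
        have hnull : (volume.restrict (Set.Icc (0:ℝ) c)) {u : ℝ | ¬ (0:ℝ) ≤ g u} = 0 := by
          refine le_antisymm ?_ zero_le
          calc (volume.restrict (Set.Icc (0:ℝ) c)) {u : ℝ | ¬ (0:ℝ) ≤ g u}
              ≤ (volume.restrict (Set.Icc (0:ℝ) c)) {u : ℝ | u ≤ 0} := by
                refine measure_mono ?_
                intro u hu
                by_contra hu0
                exact hu (hcal u (lt_of_not_ge hu0)).2
            _ ≤ volume ({u : ℝ | u ≤ 0} ∩ Set.Icc 0 c) := by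
                rw [Measure.restrict_apply' measurableSet_Icc]
            _ ≤ volume ({(0:ℝ)}) := by
                refine measure_mono ?_
                rintro u ⟨h1, h2, -⟩
                exact le_antisymm h1 h2
            _ = 0 := Real.volume_singleton
        exact (MeasureTheory.ae_iff).2 hnull
      · rw [intervalIntegral.integral_symm, neg_nonneg]
        have : (∫ u in c..(0:ℝ), -g u) ≥ 0 := by
          refine intervalIntegral.integral_nonneg_of_ae_restrict hc ?_
          have hnull : (volume.restrict (Set.Icc c (0:ℝ))) {u : ℝ | ¬ (0:ℝ) ≤ -g u} = 0 := by
            refine le_antisymm ?_ zero_le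
            calc (volume.restrict (Set.Icc c (0:ℝ))) {u : ℝ | ¬ (0:ℝ) ≤ -g u}
                ≤ (volume.restrict (Set.Icc c (0:ℝ))) {u : ℝ | 0 ≤ u} := by
                  refine measure_mono ?_
                  intro u hu
                  by_contra hu0
                  have hlt : u < 0 := lt_of_not_ge hu0
                  have := (hcal (-u) (by linarith)).1
                  have hrw : (fun ω => V (X ω - -u) (Y ω)) = fun ω => V (X ω + u) (Y ω) := by
                    funext ω; ring_nf
                  rw [hrw] at this
                  exact hu (by simpa using neg_nonneg.2 this)
              _ ≤ volume ({u : ℝ | 0 ≤ u} ∩ Set.Icc c 0) := by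
                  rw [Measure.restrict_apply' measurableSet_Icc]
              _ ≤ volume ({(0:ℝ)}) := by
                  refine measure_mono ?_
                  rintro u ⟨h1, -, h2⟩
                  exact le_antisymm h2 h1
              _ = 0 := Real.volume_singleton
          exact (MeasureTheory.ae_iff).2 hnull
        have hneg : (∫ u in c..(0:ℝ), -g u) = -∫ u in c..(0:ℝ), g u :=
          intervalIntegral.integral_neg
        linarith [this, hneg.symm.le]
    have h2 := key c
    nlinarith [mul_nonneg ha.le h1]
  · intro hopt ε hε
    have key' : ∀ c : ℝ, 0 ≤ ∫ u in (0:ℝ)..c, g u := by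
      intro c
      have h2 := key c
      have h3 := hopt c
      by_contra hneg
      have : a * ∫ u in (0:ℝ)..c, g u < 0 :=
        mul_neg_of_pos_of_neg ha (lt_of_not_ge hneg)
      linarith
    constructor
    · -- show ∫ V (X − ε) ≤ 0, i.e. g (−ε) ≤ 0
      have hrw : (fun ω => V (X ω - ε) (Y ω)) = fun ω => V (X ω + (-ε)) (Y ω) := by
        funext ω; ring_nf
      rw [hrw]
      show g (-ε) ≤ 0
      by_contra hpos
      have hgpos : 0 < g (-ε) := lt_of_not_ge hpos
      have hlow : (∫ u in (-ε)..(0:ℝ), (fun _ => g (-ε)) u) ≤ ∫ u in (-ε)..(0:ℝ), g u := by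
        refine intervalIntegral.integral_mono_on (by linarith)
          (intervalIntegrable_const) (hgii _ _) ?_
        intro u hu
        exact hg hu.1
      rw [intervalIntegral.integral_const] at hlow
      have hkey := key' (-ε)
      rw [intervalIntegral.integral_symm] at hkey
      have h5 : (∫ u in (-ε)..(0:ℝ), g u) ≤ 0 := by linarith
      have hc : ((0:ℝ) - -ε) • g (-ε) = ε * g (-ε) := by simp [smul_eq_mul]
      rw [hc] at hlow
      nlinarith [mul_pos hε hgpos]
    · -- show 0 ≤ ∫ V (X + ε), i.e. 0 ≤ g ε
      show 0 ≤ g ε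
      by_contra hneg
      have hgneg : g ε < 0 := lt_of_not_ge hneg
      have hup : (∫ u in (0:ℝ)..ε, g u) ≤ ∫ u in (0:ℝ)..ε, (fun _ => g ε) u := by
        refine intervalIntegral.integral_mono_on (by linarith)
          (hgii _ _) (intervalIntegrable_const) ?_
        intro u hu
        exact hg hu.2
      rw [intervalIntegral.integral_const] at hup
      have hkey := key' ε
      have hc : (ε - 0) • g ε = ε * g ε := by simp [smul_eq_mul]
      nlinarith

end
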